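/- For u, v ∈ ℂ with u² + v² = -1, let b, c, d ∈ ℝ and consider the Hermitian 2×2 matrix H = i·Ω·Q·Ω̄ᵀ where Ω = [[1, 0, u, v], [0, 1, v, -u]] and Q is the skew-symmetric 4×4 matrix with rows (0,-b,c,-d), (b,0,d,c), (-c,-d,0,b), (d,-c,-b,0). Then det H = b²(4(u₁v₂-u₂v₁)² - (1+|u|²+|v|²)²) - 4(u₂c - v₂d)² - 4(v₂c + u₂d)² ≤ 0 for all b, c, d, with strict inequality unless b = 0 and u₂c = v₂d and v₂c = -u₂d. In particular, H is never positive definite. -/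

import Mathlib

open Matrix ComplexOrder
set_option maxHeartbeats 1000000 in

theorem stmt_14 (u v : ℂ) (huv : u ^ 2 + v ^ 2 = -1) (b c d : ℝ)
    (Ω : Matrix (Fin 2) (Fin 4) ℂ)
    (hΩ : Ω = !![1, 0, u, v; 0, 1, v, -u])
    (Q : Matrix (Fin 4) (Fin 4) ℂ)
    (hQ : Q = !![0, -(b : ℂ), c, -(d : ℂ); b, 0, d, c; -(c : ℂ), -(d : ℂ), 0, b;
      d, -(c : ℂ), -(b : ℂ), 0])
    (H : Matrix (Fin 2) (Fin 2) ℂ) (hH : H = Complex.I • (Ω * Q * Ωᴴ)) :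
    H.det = ((b ^ 2 * (4 * (u.re * v.im - u.im * v.re) ^ 2 -
          (1 + ‖u‖ ^ 2 + ‖v‖ ^ 2) ^ 2) -
        4 * (u.im * c - v.im * d) ^ 2 - 4 * (v.im * c + u.im * d) ^ 2 : ℝ) : ℂ) ∧
      (b ^ 2 * (4 * (u.re * v.im - u.im * v.re) ^ 2 -
          (1 + ‖u‖ ^ 2 + ‖v‖ ^ 2) ^ 2) -
        4 * (u.im * c - v.im * d) ^ 2 - 4 * (v.im * c + u.im * d) ^ 2 : ℝ) ≤ 0 ∧
      (¬(b = 0 ∧ u.im * c = v.im * d ∧ v.im * c = -(u.im * d)) →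
        (b ^ 2 * (4 * (u.re * v.im - u.im * v.re) ^ 2 -
            (1 + ‖u‖ ^ 2 + ‖v‖ ^ 2) ^ 2) -
          4 * (u.im * c - v.im * d) ^ 2 - 4 * (v.im * c + u.im * d) ^ 2 : ℝ) < 0) ∧
      ¬ H.PosDef := by
  have hre : u.re ^ 2 - u.im ^ 2 + (v.re ^ 2 - v.im ^ 2) = -1 := by
    have := congrArg Complex.re huv
    simp [pow_two, Complex.add_re, Complex.mul_re] at this
    ring_nf; ring_nf at this; linarith
  have him : u.re * u.im + v.re * v.im = 0 := by
    have := congrArg Complex.im huv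
    simp [pow_two, Complex.add_im, Complex.mul_im] at this
    linarith
  set E : ℝ := (b ^ 2 * (4 * (u.re * v.im - u.im * v.re) ^ 2 -
          (1 + ‖u‖ ^ 2 + ‖v‖ ^ 2) ^ 2) -
        4 * (u.im * c - v.im * d) ^ 2 - 4 * (v.im * c + u.im * d) ^ 2 : ℝ) with hE
  have key : E = -4 * (u.im ^ 2 + v.im ^ 2) * b ^ 2 - 4 * (u.im * c - v.im * d) ^ 2
      - 4 * (v.im * c + u.im * d) ^ 2 := by
    rw [hE, Complex.sq_norm, Complex.sq_norm, Complex.normSq_apply, Complex.normSq_apply]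
    linear_combination (b ^ 2 * (v.im ^ 2 - v.re ^ 2 + u.im ^ 2 - u.re ^ 2 - 1)) * hre +
      (-4 * b ^ 2 * (v.re * v.im + u.re * u.im)) * him
  have hs : 1 ≤ u.im ^ 2 + v.im ^ 2 := by nlinarith [sq_nonneg u.re, sq_nonneg v.re]
  have hdet : H.det = (E : ℂ) := by
    subst hH hΩ hQ
    have hr : ((E : ℝ) : ℂ).re = E := Complex.ofReal_re _
    have hi : ((E : ℝ) : ℂ).im = 0 := Complex.ofReal_im _
    refine Complex.ext ?_ ?_ <;> [rw [hr]; rw [hi]] <;>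
      simp only [det_fin_two, Matrix.smul_apply, Matrix.mul_apply, Fin.sum_univ_four,
        conjTranspose_apply, Matrix.cons_val', Matrix.cons_val_zero, Matrix.cons_val_one,
        Matrix.head_cons, Matrix.empty_val', Matrix.cons_val_fin_one, Matrix.head_fin_const,
        Matrix.cons_val_succ, smul_eq_mul, hE] <;>
      simp [Complex.sq_norm, Complex.normSq_apply, Complex.mul_re, Complex.mul_im,
        Complex.add_re, Complex.add_im] <;> ring
  have hle : E ≤ 0 := by
    rw [key]; nlinarith [sq_nonneg b, sq_nonneg (u.im * c - v.im * d),
      sq_nonneg (v.im * c + u.im * d)]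
  refine ⟨hdet, hle, ?_, ?_⟩
  · intro h
    rw [key]
    have h1 : 0 ≤ (u.im * c - v.im * d) ^ 2 := sq_nonneg _
    have h2 : 0 ≤ (v.im * c + u.im * d) ^ 2 := sq_nonneg _
    by_cases hb : b = 0
    · subst hb
      by_cases hA : u.im * c = v.im * d
      · have hB : v.im * c ≠ -(u.im * d) := fun hB => h ⟨rfl, hA, hB⟩
        have hx : v.im * c + u.im * d ≠ 0 := fun h0 => hB (by linarith)
        have h3 : 0 < (v.im * c + u.im * d) ^ 2 :=
          lt_of_le_of_ne h2 (Ne.symm (pow_ne_zero 2 hx))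
        nlinarith [h1, h3]
      · have hx : u.im * c - v.im * d ≠ 0 := fun h0 => hA (by linarith)
        have h3 : 0 < (u.im * c - v.im * d) ^ 2 :=
          lt_of_le_of_ne h1 (Ne.symm (pow_ne_zero 2 hx))
        nlinarith [h2, h3]
    · have hb2 : 0 < b ^ 2 := by positivity
      nlinarith
  · intro hp
    have hpos := hp.det_pos
    rw [hdet] at hpos
    have : (0 : ℝ) < E := by exact_mod_cast hpos
    linarith
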